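/- arXiv:1002.1295 — 2 statements merged into one kernel-verified Lean document; each statement's English description precedes it below -/
import Mathlib

section
/- Conserved quantities of the modulation system: let C, V, U : I → ℝ be differentiable on an interval I containing t₀, with C(t) > 0, satisfying C'(t) = ε·(4/(5-m))·(a'(ε·U(t))/a(ε·U(t)))·C(t)·V(t), V'(t) = ε·(8/(m+3))·(a'(ε·U(t))/a(ε·U(t)))·C(t), and U'(t) = V(t), with C(t₀) = c₀ > 0 and V(t₀) = v₀. Then for all t ∈ I: C(t) = c₀·( a(ε·U(t)) / a(ε·U(t₀)) )^(4/(5-m)) and V(t)² = v₀² + 4·λ₀·(C(t) - c₀), where λ₀ := (5-m)/(m+3). -/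
open Real

lemma const_of_hasDerivWithinAt_zero {s : Set ℝ} (hs : Convex ℝ s) {f : ℝ → ℝ}
    (hf : ∀ x ∈ s, HasDerivWithinAt f 0 s x) {x y : ℝ} (hx : x ∈ s) (hy : y ∈ s) :
    f x = f y := by
  have h := Convex.norm_image_sub_le_of_norm_hasDerivWithin_le (C := 0) (f' := fun _ => 0)
    hf (fun z _ => by simp) hs hy hx
  simp only [zero_mul] at h
  have := norm_le_zero_iff.mp h
  linarith [sub_eq_zero.mp this]

theorem stmt11 (m ε : ℝ) (hm2 : 2 ≤ m) (hm5 : m < 5) (hε : 0 < ε)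
    (a : ℝ → ℝ) (ha : ContDiff ℝ 1 a) (hapos : ∀ r, 0 < a r)
    (I : Set ℝ) (hI : I.OrdConnected) (t₀ : ℝ) (ht₀ : t₀ ∈ I)
    (C V U : ℝ → ℝ) (c₀ v₀ : ℝ) (hc₀ : 0 < c₀)
    (hCpos : ∀ t ∈ I, 0 < C t)
    (hC : ∀ t ∈ I, HasDerivWithinAt C
        (ε * (4 / (5 - m)) * (deriv a (ε * U t) / a (ε * U t)) * C t * V t) I t)
    (hV : ∀ t ∈ I, HasDerivWithinAt V
        (ε * (8 / (m + 3)) * (deriv a (ε * U t) / a (ε * U t)) * C t) I t)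
    (hU : ∀ t ∈ I, HasDerivWithinAt U (V t) I t)
    (hC0 : C t₀ = c₀) (hV0 : V t₀ = v₀) :
    ∀ t ∈ I, C t = c₀ * (a (ε * U t) / a (ε * U t₀)) ^ ((4:ℝ) / (5 - m)) ∧
      V t ^ 2 = v₀ ^ 2 + 4 * ((5 - m) / (m + 3)) * (C t - c₀) := by
  have hconv : Convex ℝ I := convex_iff_ordConnected.mpr hI
  have h5 : (0:ℝ) < 5 - m := by linarith
  have h3 : (0:ℝ) < m + 3 := by linarith
  set p : ℝ := 4 / (5 - m) with hp_def
  -- derivative of t ↦ a (ε * U t)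
  have hga : ∀ t ∈ I, HasDerivWithinAt (fun t => a (ε * U t))
      (deriv a (ε * U t) * (ε * V t)) I t := by
    intro t ht
    exact ((ha.differentiable one_ne_zero (ε * U t)).hasDerivAt).comp_hasDerivWithinAt t
      ((hU t ht).const_mul ε)
  -- first conserved quantity
  have hH : ∀ t ∈ I, HasDerivWithinAt (fun t => C t * (a (ε * U t)) ^ (-p)) 0 I t := by
    intro t ht
    have hat : 0 < a (ε * U t) := hapos _
    have hr : HasDerivWithinAt (fun t => (a (ε * U t)) ^ (-p))
        ((deriv a (ε * U t) * (ε * V t)) * (-p) * (a (ε * U t)) ^ (-p - 1)) I t :=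
      (hga t ht).rpow_const (Or.inl hat.ne')
    have := (hC t ht).mul hr
    convert this using 1
    · rfl
    · rfl
    · rfl
    have hsub : (a (ε * U t)) ^ (-p - 1) = (a (ε * U t)) ^ (-p) / a (ε * U t) := by
      rw [Real.rpow_sub hat, Real.rpow_one]
    rw [hsub]
    field_simp
    ring
  have hG : ∀ t ∈ I, HasDerivWithinAt
      (fun t => V t ^ 2 - 4 * ((5 - m) / (m + 3)) * C t) 0 I t := by
    intro t ht
    have := ((hV t ht).pow 2).sub ((hC t ht).const_mul (4 * ((5 - m) / (m + 3))))
    convert this using 1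
    · rfl
    · rfl
    · rfl
    have hat : 0 < a (ε * U t) := hapos _
    rw [hp_def]
    field_simp
    ring
  intro t ht
  have hat : 0 < a (ε * U t) := hapos _
  have hat0 : 0 < a (ε * U t₀) := hapos _
  have key1 : C t * (a (ε * U t)) ^ (-p) = c₀ * (a (ε * U t₀)) ^ (-p) := by
    have := const_of_hasDerivWithinAt_zero hconv hH ht ht₀
    simpa [hC0] using this
  have key2 : V t ^ 2 - 4 * ((5 - m) / (m + 3)) * C t
      = v₀ ^ 2 - 4 * ((5 - m) / (m + 3)) * c₀ := by
    have := const_of_hasDerivWithinAt_zero hconv hG ht ht₀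
    simpa [hC0, hV0] using this
  constructor
  · rw [Real.div_rpow hat.le hat0.le]
    have h1 : (a (ε * U t)) ^ (-p) = ((a (ε * U t)) ^ p)⁻¹ := Real.rpow_neg hat.le p
    have h2 : (a (ε * U t₀)) ^ (-p) = ((a (ε * U t₀)) ^ p)⁻¹ := Real.rpow_neg hat0.le p
    rw [h1, h2] at key1
    have hne1 : (a (ε * U t)) ^ p ≠ 0 := (Real.rpow_pos_of_pos hat p).ne'
    have hne2 : (a (ε * U t₀)) ^ p ≠ 0 := (Real.rpow_pos_of_pos hat0 p).ne'
    field_simp at key1 ⊢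
    linarith [key1]
  · linarith [key2]
end

section
/- Existence of approximated dynamical parameters (increasing potential): set T_ε := ε^(-1-1/100)/v₀. There exists a unique C¹ solution (V, C, U, H) on [-T_ε, ∞) of the system V' = ε·f₁(C,U), C' = ε·f₂(C,V,U), U' = V, H' = -(1/2)·V'·U with V(-T_ε) = v₀, C(-T_ε) = 1, U(-T_ε) = -v₀·T_ε, H(-T_ε) = 0, where f₁(C,U) := 8·a'(ε·U)·C/((m+3)·a(ε·U)) and f₂(C,V,U) := 4·a'(ε·U)·C·V/((5-m)·a(ε·U)). Moreover C and V are strictly increasing, and for all t ≥ -T_ε: 1 ≤ C(t) < 2^(4/(5-m)), v₀ ≤ V(t) < (v₀² + 4·λ₀·(2^(4/(5-m)) - 1))^(1/2), V(t)² = v₀² + 4·λ₀·(C(t) - 1), and C(t) = ( a(ε·U(t)) / a(-ε·v₀·T_ε) )^(4/(5-m)). -/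
open Real Set

/-- `f₁(C,U) = 8 a'(εU) C / ((m+3) a(εU))`. -/
noncomputable def f₁ (m ε : ℝ) (a : ℝ → ℝ) (C U : ℝ) : ℝ :=
  8 * deriv a (ε * U) * C / ((m + 3) * a (ε * U))

/-- `f₂(C,V,U) = 4 a'(εU) C V / ((5-m) a(εU))`. -/
noncomputable def f₂ (m ε : ℝ) (a : ℝ → ℝ) (C V U : ℝ) : ℝ :=
  4 * deriv a (ε * U) * C * V / ((5 - m) * a (ε * U))

/-- `(V, C, U, H)` is a C¹ solution on `[-Tε, ∞)` of the modulation system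
`V' = ε f₁(C,U)`, `C' = ε f₂(C,V,U)`, `U' = V`, `H' = -(1/2) V' U`, with data
`V(-Tε) = v₀`, `C(-Tε) = 1`, `U(-Tε) = -v₀ Tε`, `H(-Tε) = 0`. -/
def IsModulationSol (m v₀ ε Tε : ℝ) (a : ℝ → ℝ) (V C U H : ℝ → ℝ) : Prop :=
  ContDiffOn ℝ 1 V (Ici (-Tε)) ∧ ContDiffOn ℝ 1 C (Ici (-Tε)) ∧
  ContDiffOn ℝ 1 U (Ici (-Tε)) ∧ ContDiffOn ℝ 1 H (Ici (-Tε)) ∧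
  (∀ t ∈ Ici (-Tε), HasDerivWithinAt V (ε * f₁ m ε a (C t) (U t)) (Ici (-Tε)) t) ∧
  (∀ t ∈ Ici (-Tε), HasDerivWithinAt C (ε * f₂ m ε a (C t) (V t) (U t)) (Ici (-Tε)) t) ∧
  (∀ t ∈ Ici (-Tε), HasDerivWithinAt U (V t) (Ici (-Tε)) t) ∧
  (∀ t ∈ Ici (-Tε), HasDerivWithinAt H (-(1/2) * (ε * f₁ m ε a (C t) (U t)) * U t)
      (Ici (-Tε)) t) ∧
  V (-Tε) = v₀ ∧ C (-Tε) = 1 ∧ U (-Tε) = -(v₀ * Tε) ∧ H (-Tε) = 0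

structure GoodPot (m ε : ℝ) (a : ℝ → ℝ) : Prop where
  hm2 : 2 ≤ m
  hm5 : m < 5
  hε : 0 < ε
  ha : ContDiff ℝ 1 a
  ha1 : ∀ r, 1 < a r
  ha2 : ∀ r, a r < 2
  ha' : ∀ r, 0 < deriv a r
  hbd : ∃ K, ∀ r, |deriv a r| ≤ K

noncomputable def gA (m ε u₀ : ℝ) (a : ℝ → ℝ) (u : ℝ) : ℝ :=
  (a (ε * u) / a (ε * u₀)) ^ ((4:ℝ)/(5-m))

noncomputable def FA (m v₀ ε u₀ : ℝ) (a : ℝ → ℝ) (u : ℝ) : ℝ :=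
  Real.sqrt (v₀ ^ 2 + 4 * ((5-m)/(m+3)) * (gA m ε u₀ a u - 1)) ⊔ v₀

noncomputable def gd (m ε u₀ : ℝ) (a : ℝ → ℝ) (u : ℝ) : ℝ :=
  ((4:ℝ)/(5-m)) * (deriv a (ε*u) * ε / a (ε*u)) * gA m ε u₀ a u

noncomputable def Fd (m v₀ ε u₀ : ℝ) (a : ℝ → ℝ) (u : ℝ) : ℝ :=
  2 * ((5-m)/(m+3)) * gd m ε u₀ a u / FA m v₀ ε u₀ a u

noncomputable def PhiA (m v₀ ε u₀ : ℝ) (a : ℝ → ℝ) (u : ℝ) : ℝ :=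
  ∫ s in u₀..u, (FA m v₀ ε u₀ a s)⁻¹

noncomputable def VmaxA (m v₀ : ℝ) : ℝ :=
  Real.sqrt (v₀ ^ 2 + 4 * ((5-m)/(m+3)) * ((2:ℝ) ^ ((4:ℝ)/(5-m)) - 1))

namespace GoodPot

set_option linter.unusedSectionVars false

variable {m v₀ ε u₀ : ℝ} {a : ℝ → ℝ} (h : GoodPot m ε a)
include h

theorem h5m : 0 < 5 - m := by linarith [h.hm5]
theorem h3m : 0 < m + 3 := by linarith [h.hm2]
theorem hp : 0 < (4:ℝ)/(5-m) := by have := h.h5m; positivity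
theorem apos (r : ℝ) : 0 < a r := lt_trans one_pos (h.ha1 r)
theorem a_ne (r : ℝ) : a r ≠ 0 := (h.apos r).ne'
theorem amono : StrictMono a := strictMono_of_deriv_pos h.ha'
theorem adiff : Differentiable ℝ a := h.ha.differentiable one_ne_zero
theorem acont : Continuous a := h.adiff.continuous
theorem adcont : Continuous (deriv a) := h.ha.continuous_deriv le_rfl
theorem hlam : 0 < (5-m)/(m+3) := div_pos h.h5m h.h3m

theorem base_pos (u : ℝ) : 0 < a (ε * u) / a (ε * u₀) := div_pos (h.apos _) (h.apos _)

theorem gpos (u : ℝ) : 0 < gA m ε u₀ a u := Real.rpow_pos_of_pos (h.base_pos u) _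

theorem gcont : Continuous (gA m ε u₀ a) := by
  apply Continuous.rpow_const
  · exact (h.acont.comp (continuous_const.mul continuous_id)).div_const _
  · exact fun u => Or.inl (div_ne_zero (h.a_ne _) (h.a_ne _))

theorem g_u₀ : gA m ε u₀ a u₀ = 1 := by
  simp [gA, div_self (h.a_ne (ε * u₀)), Real.one_rpow]

theorem base_lt_two (u : ℝ) : a (ε * u) / a (ε * u₀) < 2 := by
  rw [div_lt_iff₀ (h.apos _)]
  nlinarith [h.ha2 (ε * u), h.ha1 (ε * u₀), h.apos (ε * u)]

theorem g_lt (u : ℝ) : gA m ε u₀ a u < (2:ℝ) ^ ((4:ℝ)/(5-m)) :=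
  Real.rpow_lt_rpow (h.base_pos u).le (h.base_lt_two u) h.hp

theorem one_le_g {u : ℝ} (hu : u₀ ≤ u) : 1 ≤ gA m ε u₀ a u := by
  have hb : 1 ≤ a (ε * u) / a (ε * u₀) :=
    (one_le_div (h.apos _)).2 (h.amono.monotone (by nlinarith [h.hε]))
  calc (1:ℝ) = 1 ^ ((4:ℝ)/(5-m)) := (Real.one_rpow _).symm
  _ ≤ _ := Real.rpow_le_rpow zero_le_one hb h.hp.le

theorem hasDerivAt_g (u : ℝ) : HasDerivAt (gA m ε u₀ a) (gd m ε u₀ a u) u := by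
  have hb : HasDerivAt (fun u => a (ε * u) / a (ε * u₀))
      (deriv a (ε * u) * ε / a (ε * u₀)) u := by
    have h1 : HasDerivAt (fun u : ℝ => ε * u) ε u := by
      simpa using (hasDerivAt_id u).const_mul ε
    exact (((h.adiff (ε * u)).hasDerivAt.comp u h1)).div_const _
  have h2 := (Real.hasDerivAt_rpow_const
      (x := a (ε * u) / a (ε * u₀)) (p := (4:ℝ)/(5-m)) (Or.inl (h.base_pos u).ne')).comp u hb
  refine h2.congr_deriv ?_; symm
  have hbp : (0:ℝ) < a (ε * u) / a (ε * u₀) := h.base_pos u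
  rw [Real.rpow_sub_one hbp.ne']
  unfold gd gA
  have hA := h.a_ne (ε*u); have hA0 := h.a_ne (ε*u₀); have h5 : (5:ℝ)-m ≠ 0 := h.h5m.ne'
  generalize (a (ε * u) / a (ε * u₀)) ^ ((4:ℝ)/(5-m)) = X
  field_simp

theorem arg_nonneg {u : ℝ} (hv₀ : 0 ≤ v₀) (hu : u₀ ≤ u) :
    0 ≤ v₀ ^ 2 + 4 * ((5-m)/(m+3)) * (gA m ε u₀ a u - 1) := by
  nlinarith [h.one_le_g (u₀ := u₀) hu, h.hlam, sq_nonneg v₀]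

theorem F_ge (u : ℝ) : v₀ ≤ FA m v₀ ε u₀ a u := le_max_right _ _

theorem F_cont : Continuous (FA m v₀ ε u₀ a) := by
  unfold FA
  exact (Real.continuous_sqrt.comp (continuous_const.add (continuous_const.mul (h.gcont.sub continuous_const)))).max continuous_const

theorem F_eq {u : ℝ} (hv₀ : 0 ≤ v₀) (hu : u₀ ≤ u) :
    FA m v₀ ε u₀ a u = Real.sqrt (v₀ ^ 2 + 4 * ((5-m)/(m+3)) * (gA m ε u₀ a u - 1)) := by
  apply max_eq_left
  calc v₀ = Real.sqrt (v₀ ^ 2) := (Real.sqrt_sq hv₀).symm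
  _ ≤ _ := Real.sqrt_le_sqrt (by nlinarith [h.one_le_g (u₀ := u₀) hu, h.hlam])

theorem F_sq {u : ℝ} (hv₀ : 0 ≤ v₀) (hu : u₀ ≤ u) :
    FA m v₀ ε u₀ a u ^ 2 = v₀ ^ 2 + 4 * ((5-m)/(m+3)) * (gA m ε u₀ a u - 1) := by
  rw [h.F_eq hv₀ hu]
  exact Real.sq_sqrt (h.arg_nonneg hv₀ hu)

theorem v₀_lt_Vmax (hv₀ : 0 < v₀) : v₀ < VmaxA m v₀ := by
  have h1 : (1:ℝ) < (2:ℝ) ^ ((4:ℝ)/(5-m)) := by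
    calc (1:ℝ) = 1 ^ ((4:ℝ)/(5-m)) := (Real.one_rpow _).symm
    _ < _ := Real.rpow_lt_rpow zero_le_one one_lt_two h.hp
  calc v₀ = Real.sqrt (v₀ ^ 2) := (Real.sqrt_sq hv₀.le).symm
  _ < _ := Real.sqrt_lt_sqrt (sq_nonneg _) (by nlinarith [h.hlam])

theorem F_lt (hv₀ : 0 < v₀) (u : ℝ) : FA m v₀ ε u₀ a u < VmaxA m v₀ := by
  apply max_lt _ (h.v₀_lt_Vmax hv₀)
  have h1 : (1:ℝ) < (2:ℝ) ^ ((4:ℝ)/(5-m)) := by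
    calc (1:ℝ) = 1 ^ ((4:ℝ)/(5-m)) := (Real.one_rpow _).symm
    _ < _ := Real.rpow_lt_rpow zero_le_one one_lt_two h.hp
  have hVpos : 0 < VmaxA m v₀ := lt_trans hv₀ (h.v₀_lt_Vmax hv₀)
  rw [Real.sqrt_lt' hVpos]
  have : VmaxA m v₀ ^ 2 = v₀ ^ 2 + 4 * ((5-m)/(m+3)) * ((2:ℝ) ^ ((4:ℝ)/(5-m)) - 1) :=
    Real.sq_sqrt (by nlinarith [h.hlam])
  rw [this]
  nlinarith [h.g_lt (u₀ := u₀) u, h.hlam]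

theorem F_pos (hv₀ : 0 < v₀) (u : ℝ) : 0 < FA m v₀ ε u₀ a u := lt_of_lt_of_le hv₀ (h.F_ge u)

theorem Vmax_pos (hv₀ : 0 < v₀) : 0 < VmaxA m v₀ := lt_trans hv₀ (h.v₀_lt_Vmax hv₀)

theorem intF (hv₀ : 0 < v₀) : Continuous fun s => (FA m v₀ ε u₀ a s)⁻¹ :=
  (h.F_cont (v₀ := v₀)).inv₀ fun u => (h.F_pos hv₀ u).ne'

theorem hasDerivAt_Phi (hv₀ : 0 < v₀) (u : ℝ) :
    HasDerivAt (PhiA m v₀ ε u₀ a) (FA m v₀ ε u₀ a u)⁻¹ u :=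
  intervalIntegral.integral_hasDerivAt_right ((h.intF hv₀).intervalIntegrable _ _)
    ((h.intF hv₀).stronglyMeasurableAtFilter _ _) (h.intF hv₀).continuousAt

theorem Phi_mono (hv₀ : 0 < v₀) : StrictMono (PhiA m v₀ ε u₀ a) :=
  strictMono_of_deriv_pos fun u => by
    rw [(h.hasDerivAt_Phi hv₀ u).deriv]; exact inv_pos.2 (h.F_pos hv₀ u)

theorem Phi_lb (hv₀ : 0 < v₀) {u : ℝ} (hu : u₀ ≤ u) :
    (u - u₀) * (VmaxA m v₀)⁻¹ ≤ PhiA m v₀ ε u₀ a u := by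
  have hm := intervalIntegral.integral_mono_on (μ := MeasureTheory.volume)
    (f := fun _ => (VmaxA m v₀)⁻¹) (g := fun s => (FA m v₀ ε u₀ a s)⁻¹) hu
    (intervalIntegrable_const) ((h.intF hv₀).intervalIntegrable _ _)
    (fun s _ => inv_anti₀ (h.F_pos hv₀ s) (h.F_lt hv₀ s).le)
  simpa [smul_eq_mul, PhiA] using hm

theorem Phi_ub (hv₀ : 0 < v₀) {u : ℝ} (hu : u ≤ u₀) :
    PhiA m v₀ ε u₀ a u ≤ (u - u₀) * (VmaxA m v₀)⁻¹ := by
  have hm := intervalIntegral.integral_mono_on (μ := MeasureTheory.volume)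
    (f := fun _ => (VmaxA m v₀)⁻¹) (g := fun s => (FA m v₀ ε u₀ a s)⁻¹) hu
    (intervalIntegrable_const) ((h.intF hv₀).intervalIntegrable _ _)
    (fun s _ => inv_anti₀ (h.F_pos hv₀ s) (h.F_lt hv₀ s).le)
  rw [intervalIntegral.integral_const, smul_eq_mul] at hm
  unfold PhiA
  rw [intervalIntegral.integral_symm u u₀]
  linarith

theorem Phi_surj (hv₀ : 0 < v₀) : Function.Surjective (PhiA m v₀ ε u₀ a) := by
  have hcont : Continuous (PhiA m v₀ ε u₀ a) := by
    have : Differentiable ℝ (PhiA m v₀ ε u₀ a) :=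
      fun u => (h.hasDerivAt_Phi hv₀ u).differentiableAt
    exact this.continuous
  have hc : 0 < (VmaxA m v₀)⁻¹ := inv_pos.2 (h.Vmax_pos hv₀)
  have hlin_top : Filter.Tendsto (fun u : ℝ => (u - u₀) * (VmaxA m v₀)⁻¹)
      Filter.atTop Filter.atTop :=
    (Filter.tendsto_atTop_add_const_right _ (-u₀) Filter.tendsto_id).atTop_mul_const hc
  have hlin_bot : Filter.Tendsto (fun u : ℝ => (u - u₀) * (VmaxA m v₀)⁻¹)
      Filter.atBot Filter.atBot :=
    (Filter.tendsto_atBot_add_const_right _ (-u₀) Filter.tendsto_id).atBot_mul_const hc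
  refine hcont.surjective ?_ ?_
  · exact Filter.tendsto_atTop_mono' _
      ((Filter.eventually_ge_atTop u₀).mono fun u hu => h.Phi_lb hv₀ hu) hlin_top
  · exact Filter.tendsto_atBot_mono' _
      ((Filter.eventually_le_atBot u₀).mono fun u hu => h.Phi_ub hv₀ hu) hlin_bot

theorem hasDerivWithinAt_F (hv₀ : 0 < v₀) {u : ℝ} (hu : u ∈ Ici u₀) :
    HasDerivWithinAt (FA m v₀ ε u₀ a) (Fd m v₀ ε u₀ a u) (Ici u₀) u := by
  set lam := (5-m)/(m+3) with hlamdef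
  have hq : HasDerivAt (fun u => v₀ ^ 2 + 4 * lam * (gA m ε u₀ a u - 1))
      (4 * lam * gd m ε u₀ a u) u := by
    have := ((h.hasDerivAt_g (u₀ := u₀) u).sub_const 1).const_mul (4 * lam)
    simpa using this.const_add (v₀ ^ 2)
  have hargpos : 0 < v₀ ^ 2 + 4 * lam * (gA m ε u₀ a u - 1) := by
    nlinarith [h.one_le_g (u₀ := u₀) hu, h.hlam, sq_nonneg v₀, hv₀]
  have hs := Real.hasDerivAt_sqrt hargpos.ne'
  have hcomp := (hs.comp u hq).hasDerivWithinAt (s := Ici u₀)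
  have heq : ∀ y ∈ Ici u₀, FA m v₀ ε u₀ a y =
      (Real.sqrt ∘ fun u => v₀ ^ 2 + 4 * lam * (gA m ε u₀ a u - 1)) y :=
    fun y hy => h.F_eq hv₀.le hy
  have h2 := hcomp.congr heq (heq u hu)
  refine h2.congr_deriv ?_; symm
  unfold Fd
  rw [h.F_eq hv₀.le hu, ← hlamdef]
  rw [div_eq_mul_inv, one_div, mul_inv]
  ring

theorem F_lipschitz (hv₀ : 0 < v₀) : ∃ L : NNReal,
    LipschitzOnWith L (FA m v₀ ε u₀ a) (Ici u₀) := by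
  obtain ⟨K, hK⟩ := h.hbd
  have hK0 : 0 ≤ K := le_trans (abs_nonneg _) (hK 0)
  have h2p : (0:ℝ) < (2:ℝ) ^ ((4:ℝ)/(5-m)) := Real.rpow_pos_of_pos two_pos _
  set M : ℝ := (4/(5-m)) * (K * ε) * (2:ℝ) ^ ((4:ℝ)/(5-m)) with hM
  have hM0 : 0 ≤ M :=
    mul_nonneg (mul_nonneg h.hp.le (mul_nonneg hK0 h.hε.le)) h2p.le
  set L : ℝ := 2 * ((5-m)/(m+3)) * M / v₀ with hL
  have hL0 : 0 ≤ L :=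
    div_nonneg (mul_nonneg (mul_nonneg two_pos.le h.hlam.le) hM0) hv₀.le
  refine ⟨Real.toNNReal L, (convex_Ici u₀).lipschitzOnWith_of_nnnorm_hasDerivWithin_le
    (f' := Fd m v₀ ε u₀ a) (fun x hx => h.hasDerivWithinAt_F hv₀ hx) ?_⟩
  intro x hx
  rw [← NNReal.coe_le_coe, coe_nnnorm, Real.norm_eq_abs, Real.coe_toNNReal _ hL0]
  have ha'x := h.ha' (ε * x)
  have hax := h.apos (ε * x)
  have hax1 := h.ha1 (ε * x)
  have hgx := h.g_lt (u₀ := u₀) x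
  have hgpos := h.gpos (u₀ := u₀) x
  have hdd : 0 ≤ deriv a (ε*x) * ε / a (ε*x) :=
    div_nonneg (mul_nonneg ha'x.le h.hε.le) hax.le
  have hgd0 : 0 ≤ gd m ε u₀ a x :=
    mul_nonneg (mul_nonneg h.hp.le hdd) hgpos.le
  have e1 : deriv a (ε*x) ≤ K := le_trans (le_abs_self _) (hK _)
  have e2 : deriv a (ε*x) * ε / a (ε*x) ≤ K * ε := by
    rw [div_le_iff₀ hax]
    nlinarith [mul_le_mul_of_nonneg_right e1 h.hε.le,
      mul_nonneg (mul_nonneg hK0 h.hε.le) (sub_nonneg.2 hax1.le)]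
  have hgd : gd m ε u₀ a x ≤ M := by
    have t1 : (4/(5-m)) * (deriv a (ε*x) * ε / a (ε*x)) ≤ (4/(5-m)) * (K * ε) :=
      mul_le_mul_of_nonneg_left e2 h.hp.le
    have t2 : 0 ≤ (4/(5-m)) * (K * ε) := mul_nonneg h.hp.le (mul_nonneg hK0 h.hε.le)
    exact mul_le_mul t1 hgx.le hgpos.le t2
  have hFge : v₀ ≤ FA m v₀ ε u₀ a x := h.F_ge x
  have hFpos : 0 < FA m v₀ ε u₀ a x := h.F_pos hv₀ x
  have : |Fd m v₀ ε u₀ a x| = 2 * ((5-m)/(m+3)) * gd m ε u₀ a x / FA m v₀ ε u₀ a x := by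
    unfold Fd
    rw [abs_of_nonneg]
    exact div_nonneg (mul_nonneg (mul_nonneg (by norm_num) h.hlam.le) hgd0) hFpos.le
  rw [this, hL]
  apply div_le_div₀ (mul_nonneg (mul_nonneg two_pos.le h.hlam.le) hM0) ?_ hv₀ hFge
  exact mul_le_mul_of_nonneg_left hgd (mul_nonneg two_pos.le h.hlam.le)

theorem exists_U (hv₀ : 0 < v₀) (Tε : ℝ) :
    ∃ U : ℝ → ℝ, Continuous U ∧ StrictMono U ∧ U (-Tε) = u₀ ∧
      (∀ t, HasDerivAt U (FA m v₀ ε u₀ a (U t)) t) := by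
  have hmono := h.Phi_mono (u₀ := u₀) hv₀
  have hsurj := h.Phi_surj (u₀ := u₀) hv₀
  set e := StrictMono.orderIsoOfSurjective _ hmono hsurj with he
  have happ : ∀ z, PhiA m v₀ ε u₀ a (e.symm z) = z := fun z =>
    StrictMono.orderIsoOfSurjective_self_symm_apply _ hmono hsurj z
  have hψd : ∀ y, HasDerivAt (fun z => (e.symm z : ℝ)) (FA m v₀ ε u₀ a (e.symm y)) y := by
    intro y
    have h1 : HasDerivAt (PhiA m v₀ ε u₀ a) (FA m v₀ ε u₀ a (e.symm y))⁻¹ (e.symm y) :=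
      h.hasDerivAt_Phi hv₀ _
    have h2 := HasDerivAt.of_local_left_inverse (e.symm.continuous.continuousAt) h1
      (inv_ne_zero (h.F_pos hv₀ _).ne') (Filter.Eventually.of_forall fun z => happ z)
    simpa [inv_inv] using h2
  refine ⟨fun t => e.symm (t + Tε), ?_, ?_, ?_, ?_⟩
  · exact e.symm.continuous.comp (continuous_id.add continuous_const)
  · intro s t hst
    exact e.symm.strictMono (by linarith)
  · have h0 : PhiA m v₀ ε u₀ a u₀ = 0 := intervalIntegral.integral_same
    have : e.symm (PhiA m v₀ ε u₀ a u₀) = u₀ :=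
      StrictMono.orderIsoOfSurjective_symm_apply_self _ hmono hsurj u₀
    simpa [h0] using this
  · intro t
    have := (hψd (t + Tε)).comp t ((hasDerivAt_id t).add_const Tε)
    simp only [mul_one] at this; exact this

end GoodPot

theorem constOn_Ici {T : ℝ} {f : ℝ → ℝ}
    (hder : ∀ t ∈ Ici T, HasDerivWithinAt f 0 (Ici T) t) :
    ∀ t ∈ Ici T, f t = f T := by
  intro t ht
  exact constant_of_has_deriv_right_zero (f := f) (a := T) (b := t)
    (fun y hy => ((hder y hy.1).continuousWithinAt).mono Icc_subset_Ici_self)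
    (fun y hy => (hder y hy.1).mono (Ici_subset_Ici.2 hy.1)) t ⟨ht, le_rfl⟩

theorem eqOn_Ici_of_deriv {T : ℝ} {f g φ : ℝ → ℝ}
    (hdf : ∀ t ∈ Ici T, HasDerivWithinAt f (φ t) (Ici T) t)
    (hdg : ∀ t ∈ Ici T, HasDerivWithinAt g (φ t) (Ici T) t)
    (h0 : f T = g T) : EqOn f g (Ici T) := by
  intro t ht
  exact eq_of_has_deriv_right_eq (f' := φ)
    (fun y hy => (hdf y hy.1).mono (Ici_subset_Ici.2 hy.1))
    (fun y hy => (hdg y hy.1).mono (Ici_subset_Ici.2 hy.1))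
    (fun y hy => ((hdf y hy.1).continuousWithinAt).mono Icc_subset_Ici_self)
    (fun y hy => ((hdg y hy.1).continuousWithinAt).mono Icc_subset_Ici_self) h0 t ⟨ht, le_rfl⟩

theorem smonoOn_Ici {T : ℝ} {f φ : ℝ → ℝ}
    (hd : ∀ t ∈ Ici T, HasDerivWithinAt f (φ t) (Ici T) t)
    (hpos : ∀ t ∈ Ici T, 0 < φ t) : StrictMonoOn f (Ici T) :=
  strictMonoOn_of_hasDerivWithinAt_pos (convex_Ici T)
    (fun t ht => (hd t ht).continuousWithinAt)
    (fun x hx => ((hd x (interior_subset hx)).mono interior_subset))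
    (fun x hx => hpos x (interior_subset hx))

theorem contDiffOn_Ici_of_deriv {T : ℝ} {f φ : ℝ → ℝ}
    (hd : ∀ t ∈ Ici T, HasDerivWithinAt f (φ t) (Ici T) t)
    (hφ : ContinuousOn φ (Ici T)) : ContDiffOn ℝ 1 f (Ici T) := by
  rw [show (1 : WithTop ℕ∞) = 0 + 1 from rfl,
    contDiffOn_succ_iff_derivWithin (uniqueDiffOn_Ici T)]
  refine ⟨fun t ht => (hd t ht).differentiableWithinAt, by simp, ?_⟩
  rw [contDiffOn_zero]
  exact hφ.congr fun t ht => (hd t ht).derivWithin (uniqueDiffOn_Ici T t ht)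

theorem sol_normalform {m v₀ ε Tε : ℝ} {a : ℝ → ℝ} {V C U H : ℝ → ℝ}
    (h : GoodPot m ε a) (hv₀ : 0 < v₀)
    (hs : IsModulationSol m v₀ ε Tε a V C U H) :
    ∀ t ∈ Ici (-Tε),
      C t = gA m ε (-(v₀ * Tε)) a (U t) ∧ -(v₀ * Tε) ≤ U t ∧
      V t = FA m v₀ ε (-(v₀ * Tε)) a (U t) := by
  obtain ⟨hVc, hCc, hUc, hHc, hV, hC, hU, hH, hV0, hC0, hU0, hH0⟩ := hs
  set u₀ : ℝ := -(v₀ * Tε) with hu₀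
  have h5 : (5:ℝ) - m ≠ 0 := h.h5m.ne'
  have h3 : (m:ℝ) + 3 ≠ 0 := h.h3m.ne'
  have hAdw : ∀ t ∈ Ici (-Tε), HasDerivWithinAt (fun t => a (ε * U t))
      (deriv a (ε * U t) * (ε * V t)) (Ici (-Tε)) t := fun t ht =>
    (h.adiff _).hasDerivAt.comp_hasDerivWithinAt t ((hU t ht).const_mul ε)
  -- Step A : C t = gA (U t)
  have hDder : ∀ t ∈ Ici (-Tε), HasDerivWithinAt
      (fun t => C t * a (ε * U t) ^ (-((4:ℝ)/(5-m)))) 0 (Ici (-Tε)) t := by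
    intro t ht
    have hr : HasDerivWithinAt (fun t => a (ε * U t) ^ (-((4:ℝ)/(5-m))))
        ((-((4:ℝ)/(5-m))) * a (ε * U t) ^ (-((4:ℝ)/(5-m)) - 1) *
          (deriv a (ε * U t) * (ε * V t))) (Ici (-Tε)) t :=
      by have := (Real.hasDerivAt_rpow_const (x := a (ε * U t)) (p := -((4:ℝ)/(5-m)))
        (Or.inl (h.a_ne _))).comp_hasDerivWithinAt t (hAdw t ht); exact this
    have hmul := (hC t ht).mul hr
    refine hmul.congr_deriv ?_; symm
    rw [Real.rpow_sub_one (h.a_ne _)]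
    unfold f₂
    have hane := h.a_ne (ε * U t)
    field_simp
    ring
  have hconst := constOn_Ici hDder
  have hCeq : ∀ t ∈ Ici (-Tε), C t = gA m ε u₀ a (U t) := by
    intro t ht
    have hthis := hconst t ht
    rw [hC0, hU0, one_mul] at hthis
    rw [Real.rpow_neg (h.apos _).le, Real.rpow_neg (h.apos _).le] at hthis
    have hpow1 : (0:ℝ) < a (ε * U t) ^ ((4:ℝ)/(5-m)) := Real.rpow_pos_of_pos (h.apos _) _
    have hpow2 : (0:ℝ) < a (ε * u₀) ^ ((4:ℝ)/(5-m)) := Real.rpow_pos_of_pos (h.apos _) _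
    unfold gA
    rw [Real.div_rpow (h.apos _).le (h.apos _).le]
    field_simp at hthis ⊢
    linarith [hthis]
  have hCpos : ∀ t ∈ Ici (-Tε), 0 < C t := fun t ht => by
    rw [hCeq t ht]; exact h.gpos _
  -- Step C : V is increasing hence ≥ v₀
  have hVmono : StrictMonoOn V (Ici (-Tε)) := by
    apply smonoOn_Ici hV
    intro t ht
    unfold f₁
    have := h.ha' (ε * U t)
    exact mul_pos h.hε (div_pos
      (mul_pos (mul_pos (by norm_num : (0:ℝ) < 8) this) (hCpos t ht))
      (mul_pos h.h3m (h.apos _)))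
  have hVge : ∀ t ∈ Ici (-Tε), v₀ ≤ V t := by
    intro t ht
    have := hVmono.monotoneOn self_mem_Ici ht ht
    rwa [hV0] at this
  -- Step D : U increasing, ≥ u₀
  have hUge : ∀ t ∈ Ici (-Tε), u₀ ≤ U t := by
    intro t ht
    have hmu : StrictMonoOn U (Ici (-Tε)) :=
      smonoOn_Ici hU (fun t ht => lt_of_lt_of_le hv₀ (hVge t ht))
    have := hmu.monotoneOn self_mem_Ici ht ht
    rwa [hU0] at this
  -- Step E : V² = v₀² + 4λ₀(C-1)
  have hWder : ∀ t ∈ Ici (-Tε), HasDerivWithinAt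
      (fun t => V t ^ 2 - 4 * ((5-m)/(m+3)) * C t) 0 (Ici (-Tε)) t := by
    intro t ht
    have hmul := ((hV t ht).pow 2).sub ((hC t ht).const_mul (4 * ((5-m)/(m+3))))
    refine hmul.congr_deriv ?_; symm
    unfold f₁ f₂
    have hane := h.a_ne (ε * U t)
    norm_num
    field_simp
    ring
  have hWconst := constOn_Ici hWder
  have hVsq : ∀ t ∈ Ici (-Tε), V t ^ 2 = v₀ ^ 2 + 4 * ((5-m)/(m+3)) * (C t - 1) := by
    intro t ht
    have hthis := hWconst t ht
    rw [hV0, hC0] at hthis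
    linarith [hthis]
  -- Step F : V = F ∘ U
  intro t ht
  refine ⟨hCeq t ht, hUge t ht, ?_⟩
  have harg : V t ^ 2 = v₀ ^ 2 + 4 * ((5-m)/(m+3)) * (gA m ε u₀ a (U t) - 1) := by
    rw [← hCeq t ht]; exact hVsq t ht
  rw [h.F_eq hv₀.le (hUge t ht), ← harg, Real.sqrt_sq (le_trans hv₀.le (hVge t ht))]

theorem stmt12 (m v₀ ε : ℝ) (hm2 : 2 ≤ m) (hm5 : m < 5) (hv₀ : 0 < v₀) (hε : 0 < ε)
    (a : ℝ → ℝ) (ha : ContDiff ℝ 1 a)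
    (ha1 : ∀ r, 1 < a r) (ha2 : ∀ r, a r < 2) (ha' : ∀ r, 0 < deriv a r)
    (hdecay : ∃ K > (0:ℝ), ∃ μ > (0:ℝ),
      (∀ r, |deriv a r| ≤ K * Real.exp (-μ * |r|)) ∧
      (∀ r ≤ (0:ℝ), a r - 1 ≤ K * Real.exp (μ * r)) ∧
      (∀ r ≥ (0:ℝ), 2 - a r ≤ K * Real.exp (-μ * r)))
    (Tε lam0 : ℝ) (hTε : Tε = ε ^ (-(1:ℝ) - 1/100) / v₀) (hlam0 : lam0 = (5 - m) / (m + 3)) :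
    ∃ V C U H : ℝ → ℝ,
      IsModulationSol m v₀ ε Tε a V C U H ∧
      StrictMonoOn C (Ici (-Tε)) ∧ StrictMonoOn V (Ici (-Tε)) ∧
      (∀ t ∈ Ici (-Tε),
        1 ≤ C t ∧ C t < (2:ℝ) ^ ((4:ℝ) / (5 - m)) ∧
        v₀ ≤ V t ∧ V t < Real.sqrt (v₀ ^ 2 + 4 * lam0 * ((2:ℝ) ^ ((4:ℝ) / (5 - m)) - 1)) ∧
        V t ^ 2 = v₀ ^ 2 + 4 * lam0 * (C t - 1) ∧
        C t = (a (ε * U t) / a (-(ε * v₀ * Tε))) ^ ((4:ℝ) / (5 - m))) ∧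
      (∀ V' C' U' H' : ℝ → ℝ, IsModulationSol m v₀ ε Tε a V' C' U' H' →
        EqOn V V' (Ici (-Tε)) ∧ EqOn C C' (Ici (-Tε)) ∧
        EqOn U U' (Ici (-Tε)) ∧ EqOn H H' (Ici (-Tε))) := by
  subst hlam0
  have hgp : GoodPot m ε a := by
    refine ⟨hm2, hm5, hε, ha, ha1, ha2, ha', ?_⟩
    obtain ⟨K, hK, μ, hμ, hd1, -, -⟩ := hdecay
    refine ⟨K, fun r => ?_⟩
    have hexp : Real.exp (-μ * |r|) ≤ 1 := Real.exp_le_one_iff.2 (by nlinarith [abs_nonneg r])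
    calc |deriv a r| ≤ K * Real.exp (-μ * |r|) := hd1 r
    _ ≤ K * 1 := mul_le_mul_of_nonneg_left hexp hK.le
    _ = K := mul_one K
  set u₀ : ℝ := -(v₀ * Tε) with hu₀
  obtain ⟨U, hUcont, hUmono, hU0, hUd⟩ := hgp.exists_U (u₀ := u₀) hv₀ Tε
  have hUge : ∀ t ∈ Ici (-Tε), u₀ ≤ U t := by
    intro t ht
    calc u₀ = U (-Tε) := hU0.symm
    _ ≤ U t := hUmono.monotone ht
  set C : ℝ → ℝ := fun t => gA m ε u₀ a (U t) with hCdef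
  set V : ℝ → ℝ := fun t => FA m v₀ ε u₀ a (U t) with hVdef
  set φH : ℝ → ℝ := fun t => -(1/2) * (ε * f₁ m ε a (C t) (U t)) * U t with hφH
  set H : ℝ → ℝ := fun t => ∫ s in (-Tε)..t, φH s with hHdef
  have hε' := hgp.hε
  have h5 : (5:ℝ) - m ≠ 0 := hgp.h5m.ne'
  have h3 : (m:ℝ) + 3 ≠ 0 := hgp.h3m.ne'
  have hCcont : Continuous C := hgp.gcont.comp hUcont
  have hVcont : Continuous V := hgp.F_cont.comp hUcont
  have hεU : Continuous fun t => a (ε * U t) :=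
    hgp.acont.comp (continuous_const.mul hUcont)
  have hεU' : Continuous fun t => deriv a (ε * U t) :=
    hgp.adcont.comp (continuous_const.mul hUcont)
  have hf1cont : Continuous fun t => ε * f₁ m ε a (C t) (U t) := by
    unfold f₁
    exact continuous_const.mul (Continuous.div
      ((continuous_const.mul hεU').mul hCcont)
      (continuous_const.mul hεU)
      (fun t => mul_ne_zero h3 (hgp.a_ne _)))
  have hf2cont : Continuous fun t => ε * f₂ m ε a (C t) (V t) (U t) := by
    unfold f₂
    exact continuous_const.mul (Continuous.div
      (((continuous_const.mul hεU').mul hCcont).mul hVcont)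
      (continuous_const.mul hεU)
      (fun t => mul_ne_zero h5 (hgp.a_ne _)))
  have hφHcont : Continuous φH := by
    rw [hφH]
    exact (continuous_const.mul hf1cont).mul hUcont
  -- ODE forms
  have hUode : ∀ t ∈ Ici (-Tε), HasDerivWithinAt U (V t) (Ici (-Tε)) t :=
    fun t _ => (hUd t).hasDerivWithinAt
  have hVode : ∀ t ∈ Ici (-Tε),
      HasDerivWithinAt V (ε * f₁ m ε a (C t) (U t)) (Ici (-Tε)) t := by
    intro t ht
    have hmaps : MapsTo U (Ici (-Tε)) (Ici u₀) := fun s hs => hUge s hs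
    have hcomp := HasDerivWithinAt.comp t (hgp.hasDerivWithinAt_F hv₀ (hUge t ht))
      ((hUd t).hasDerivWithinAt) hmaps
    have hcomp' : HasDerivWithinAt V
        (Fd m v₀ ε u₀ a (U t) * FA m v₀ ε u₀ a (U t)) (Ici (-Tε)) t := hcomp
    convert hcomp' using 1
    unfold Fd f₁
    have hFne : FA m v₀ ε u₀ a (U t) ≠ 0 := (hgp.F_pos hv₀ _).ne'
    have hane := hgp.a_ne (ε * U t)
    rw [div_mul_cancel₀ _ hFne]
    show ε * (8 * deriv a (ε * U t) * C t / ((m + 3) * a (ε * U t)))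
      = 2 * ((5 - m) / (m + 3)) * gd m ε u₀ a (U t)
    simp only [hCdef]
    unfold gd gA
    field_simp
    ring
  have hCode : ∀ t ∈ Ici (-Tε),
      HasDerivWithinAt C (ε * f₂ m ε a (C t) (V t) (U t)) (Ici (-Tε)) t := by
    intro t ht
    have hcomp := (hgp.hasDerivAt_g (u₀ := u₀) (U t)).comp t (hUd t)
    have hcomp' : HasDerivAt C (gd m ε u₀ a (U t) * FA m v₀ ε u₀ a (U t)) t := hcomp
    have hW := hcomp'.hasDerivWithinAt (s := Ici (-Tε))
    refine hW.congr_deriv ?_; symm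
    unfold f₂
    have hane := hgp.a_ne (ε * U t)
    show ε * (4 * deriv a (ε * U t) * C t * V t / ((5 - m) * a (ε * U t)))
      = gd m ε u₀ a (U t) * FA m v₀ ε u₀ a (U t)
    simp only [hCdef, hVdef]
    unfold gd gA
    field_simp
  have hHd : ∀ t, HasDerivAt H (φH t) t := fun t =>
    intervalIntegral.integral_hasDerivAt_right (hφHcont.intervalIntegrable _ _)
      (hφHcont.stronglyMeasurableAtFilter _ _) hφHcont.continuousAt
  have hHode : ∀ t ∈ Ici (-Tε),
      HasDerivWithinAt H (-(1/2) * (ε * f₁ m ε a (C t) (U t)) * U t) (Ici (-Tε)) t :=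
    fun t _ => (hHd t).hasDerivWithinAt
  -- initial conditions
  have hU0' : U (-Tε) = -(v₀ * Tε) := hU0
  have hC0 : C (-Tε) = 1 := by
    show gA m ε u₀ a (U (-Tε)) = 1
    rw [hU0]
    exact hgp.g_u₀
  have hV0 : V (-Tε) = v₀ := by
    show FA m v₀ ε u₀ a (U (-Tε)) = v₀
    rw [hU0, hgp.F_eq hv₀.le le_rfl, hgp.g_u₀]
    norm_num [Real.sqrt_sq hv₀.le]
  have hH0 : H (-Tε) = 0 := intervalIntegral.integral_same
  -- ContDiffOn
  have hUcd := contDiffOn_Ici_of_deriv hUode hVcont.continuousOn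
  have hVcd := contDiffOn_Ici_of_deriv hVode hf1cont.continuousOn
  have hCcd := contDiffOn_Ici_of_deriv hCode hf2cont.continuousOn
  have hHcd := contDiffOn_Ici_of_deriv hHode hφHcont.continuousOn
  have hsol : IsModulationSol m v₀ ε Tε a V C U H :=
    ⟨hVcd, hCcd, hUcd, hHcd, hVode, hCode, hUode, hHode, hV0, hC0, hU0', hH0⟩
  -- positivity of C and V on the ray
  have hCpos : ∀ t ∈ Ici (-Tε), 0 < C t := fun t ht => hgp.gpos (U t)
  have hVpos : ∀ t ∈ Ici (-Tε), 0 < V t := fun t ht => hgp.F_pos hv₀ (U t)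
  refine ⟨V, C, U, H, hsol, ?_, ?_, ?_, ?_⟩
  · -- C strictly increasing
    apply smonoOn_Ici hCode
    intro t ht
    unfold f₂
    have := hgp.ha' (ε * U t)
    exact mul_pos hε (div_pos
      (mul_pos (mul_pos (mul_pos (by norm_num : (0:ℝ) < 4) this) (hCpos t ht)) (hVpos t ht))
      (mul_pos hgp.h5m (hgp.apos _)))
  · -- V strictly increasing
    apply smonoOn_Ici hVode
    intro t ht
    unfold f₁
    have := hgp.ha' (ε * U t)
    exact mul_pos hε (div_pos
      (mul_pos (mul_pos (by norm_num : (0:ℝ) < 8) this) (hCpos t ht))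
      (mul_pos hgp.h3m (hgp.apos _)))
  · -- bounds
    intro t ht
    refine ⟨hgp.one_le_g (hUge t ht), hgp.g_lt (U t), hgp.F_ge (U t),
      hgp.F_lt hv₀ (U t), hgp.F_sq hv₀.le (hUge t ht), ?_⟩
    show gA m ε u₀ a (U t) = (a (ε * U t) / a (-(ε * v₀ * Tε))) ^ ((4:ℝ)/(5-m))
    unfold gA
    rw [show ε * u₀ = -(ε * v₀ * Tε) by rw [hu₀]; ring]
  · -- uniqueness
    intro V' C' U' H' hs'
    obtain ⟨L, hLip⟩ := hgp.F_lipschitz (u₀ := u₀) hv₀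
    have hnf := sol_normalform hgp hv₀ hs'
    obtain ⟨hV'c, hC'c, hU'c, hH'c, hV', hC', hU', hH', hV'0, hC'0, hU'0, hH'0⟩ := hs'
    have hUeq : EqOn U U' (Ici (-Tε)) := by
      intro t ht
      have key := ODE_solution_unique_of_mem_Icc_right
        (v := fun _ x => FA m v₀ ε u₀ a x) (s := fun _ => Ici u₀) (K := L)
        (fun _ _ => hLip) (a := -Tε) (b := t)
        hUcont.continuousOn
        (fun s hs => (hUd s).hasDerivWithinAt)
        (fun s hs => hUge s hs.1)
        (hU'c.continuousOn.mono Icc_subset_Ici_self)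
        (fun s hs => by
          have hsI : s ∈ Ici (-Tε) := hs.1
          have hd := (hU' s hsI).mono (Ici_subset_Ici.2 hs.1)
          rwa [(hnf s hsI).2.2] at hd)
        (fun s hs => (hnf s hs.1).2.1)
        (by rw [hU0', hU'0])
      exact key ⟨ht, le_rfl⟩
    have hCeqOn : EqOn C C' (Ici (-Tε)) := by
      intro t ht
      show gA m ε u₀ a (U t) = C' t
      rw [hUeq ht, (hnf t ht).1]
    have hVeqOn : EqOn V V' (Ici (-Tε)) := by
      intro t ht
      show FA m v₀ ε u₀ a (U t) = V' t
      rw [hUeq ht, (hnf t ht).2.2]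
    refine ⟨hVeqOn, hCeqOn, hUeq, ?_⟩
    apply eqOn_Ici_of_deriv (φ := fun t => -(1/2) * (ε * f₁ m ε a (C t) (U t)) * U t)
      hHode ?_ (by rw [hH0, hH'0])
    intro t ht
    have := hH' t ht
    rwa [← hCeqOn ht, ← hUeq ht] at this
end
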